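/- Let α, β ∈ ℝ with α ≠ 0 and β ≠ 0, and let ψ⁺, ψ⁻ : ℝ² → ℝ be twice continuously differentiable functions such that: (i) there is ε > 0 with ∇ψ⁺(t,0) = ∇ψ⁻(t,0) for all t ∈ (−ε, ε) (the gradients agree along the shared edge through the vertex v = (0,0)); (ii) ∇ψ⁺(t·(β,α)) = 0 for all t ∈ [0, ε) and ∇ψ⁻(t·(−β,α)) = 0 for all t ∈ [0, ε) (the no-slip boundary condition on the two boundary edges meeting at v). Then all second partial derivatives of ψ⁺ and of ψ⁻ vanish at the origin: Hess ψ⁺(0,0) = Hess ψ⁻(0,0) = 0. Consequently, for the velocity fields u^± = curl ψ^± = (∂₂ψ^±, −∂₁ψ^±), one has ∇u⁺(0,0) = ∇u⁻(0,0) = 0. -/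

import Mathlib

/-- Classical partial derivative with respect to the first coordinate. -/
noncomputable def pd1 (f : ℝ × ℝ → ℝ) (p : ℝ × ℝ) : ℝ :=
  deriv (fun t => f (t, p.2)) p.1

/-- Classical partial derivative with respect to the second coordinate. -/
noncomputable def pd2 (f : ℝ × ℝ → ℝ) (p : ℝ × ℝ) : ℝ :=
  deriv (fun t => f (p.1, t)) p.2

/-- The Hessian matrix of a scalar function on `ℝ²`. -/
noncomputable def hess (f : ℝ × ℝ → ℝ) (p : ℝ × ℝ) : Matrix (Fin 2) (Fin 2) ℝ :=
  !![pd1 (pd1 f) p, pd2 (pd1 f) p; pd1 (pd2 f) p, pd2 (pd2 f) p]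

/-- The two-dimensional curl `curl ψ = (∂₂ψ, −∂₁ψ)` of a scalar streamfunction. -/
noncomputable def curl2 (ψ : ℝ × ℝ → ℝ) (p : ℝ × ℝ) : ℝ × ℝ :=
  (pd2 ψ p, -(pd1 ψ p))

/-- The gradient matrix of a vector field on `ℝ²`. -/
noncomputable def gradVec (u : ℝ × ℝ → ℝ × ℝ) (p : ℝ × ℝ) : Matrix (Fin 2) (Fin 2) ℝ :=
  !![pd1 (fun q => (u q).1) p, pd2 (fun q => (u q).1) p;
     pd1 (fun q => (u q).2) p, pd2 (fun q => (u q).2) p]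

/- ### Auxiliary lemmas -/

lemma curve_hasDerivAt (v : ℝ × ℝ) :
    HasDerivAt (fun t : ℝ => t • v) v 0 := by
  have h1 : HasDerivAt (fun t : ℝ => t * v.1) v.1 0 := by
    simpa using (hasDerivAt_id (0:ℝ)).mul_const v.1
  have h2 : HasDerivAt (fun t : ℝ => t * v.2) v.2 0 := by
    simpa using (hasDerivAt_id (0:ℝ)).mul_const v.2
  simpa [Prod.smul_def, smul_eq_mul] using h1.prodMk h2

lemma pd1_eq_fderiv (f : ℝ × ℝ → ℝ) (p : ℝ × ℝ) (hf : DifferentiableAt ℝ f p) :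
    pd1 f p = fderiv ℝ f p (1, 0) := by
  have hc : HasDerivAt (fun t : ℝ => (t, p.2)) ((1:ℝ), (0:ℝ)) p.1 :=
    (hasDerivAt_id p.1).prodMk (hasDerivAt_const p.1 p.2)
  exact (hf.hasFDerivAt.comp_hasDerivAt p.1 hc).deriv

lemma pd2_eq_fderiv (f : ℝ × ℝ → ℝ) (p : ℝ × ℝ) (hf : DifferentiableAt ℝ f p) :
    pd2 f p = fderiv ℝ f p (0, 1) := by
  have hc : HasDerivAt (fun t : ℝ => (p.1, t)) ((0:ℝ), (1:ℝ)) p.2 :=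
    (hasDerivAt_const p.2 p.1).prodMk (hasDerivAt_id p.2)
  exact (hf.hasFDerivAt.comp_hasDerivAt p.2 hc).deriv

/-- Key computation: for a `C²` function `f`, the map `t ↦ (∇f)(t • v) · w`
has derivative `f''(0) v w` at `t = 0`. -/
lemma key (f : ℝ × ℝ → ℝ) (hf : ContDiff ℝ 2 f) (v w : ℝ × ℝ) :
    HasDerivAt (fun t : ℝ => fderiv ℝ f (t • v) w)
      (fderiv ℝ (fderiv ℝ f) 0 v w) 0 := by
  have hf' : ContDiff ℝ 1 (fderiv ℝ f) :=
    hf.fderiv_right (by norm_num)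
  have hA : HasFDerivAt (fderiv ℝ f) (fderiv ℝ (fderiv ℝ f) 0) 0 :=
    ((hf'.differentiable one_ne_zero) 0).hasFDerivAt
  set Φ : ((ℝ × ℝ) →L[ℝ] ℝ) →L[ℝ] ℝ := ContinuousLinearMap.apply ℝ ℝ w with hΦ
  have hcomp : HasFDerivAt (fun q => Φ (fderiv ℝ f q))
      (Φ.comp (fderiv ℝ (fderiv ℝ f) 0)) 0 := Φ.hasFDerivAt.comp 0 hA
  have h0 : (0:ℝ) • v = 0 := zero_smul ℝ v
  rw [← h0] at hcomp
  have := hcomp.comp_hasDerivAt 0 (curve_hasDerivAt v)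
  simpa [hΦ, ContinuousLinearMap.apply, Function.comp_def] using this

lemma right_vanish_deriv (h : ℝ → ℝ) (d : ℝ) (hd : HasDerivAt h d 0)
    (ε : ℝ) (hε : 0 < ε) (h0 : ∀ t ∈ Set.Ico (0:ℝ) ε, h t = 0) : d = 0 := by
  have hmem : Set.Ico (0:ℝ) ε ∈ nhdsWithin (0:ℝ) (Set.Ici 0) := by
    rw [show Set.Ico (0:ℝ) ε = Set.Ici 0 ∩ Set.Iio ε from (Set.Ici_inter_Iio).symm]
    exact Filter.inter_mem self_mem_nhdsWithin (nhdsWithin_le_nhds (Iio_mem_nhds hε))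
  have hzero : HasDerivWithinAt (fun _ : ℝ => (0:ℝ)) 0 (Set.Ici 0) 0 :=
    (hasDerivAt_const 0 0).hasDerivWithinAt
  have hh : HasDerivWithinAt h 0 (Set.Ici 0) 0 :=
    hzero.congr_of_eventuallyEq
      (Filter.eventuallyEq_of_mem hmem fun t ht => h0 t ht) (h0 0 ⟨le_rfl, hε⟩)
  have hu : UniqueDiffWithinAt ℝ (Set.Ici (0:ℝ)) 0 :=
    (uniqueDiffOn_Ici 0) 0 Set.self_mem_Ici
  have e1 := hd.hasDerivWithinAt.derivWithin hu
  have e2 := hh.derivWithin hu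
  rw [e2] at e1; exact e1.symm

lemma nhds_vanish_deriv (h : ℝ → ℝ) (d : ℝ) (hd : HasDerivAt h d 0)
    (ε : ℝ) (hε : 0 < ε) (h0 : ∀ t ∈ Set.Ioo (-ε) ε, h t = 0) : d = 0 := by
  have hmem : Set.Ioo (-ε) ε ∈ nhds (0:ℝ) := Ioo_mem_nhds (by linarith) hε
  have hh : HasDerivAt h 0 0 :=
    (hasDerivAt_const (0:ℝ) (0:ℝ)).congr_of_eventuallyEq
      (Filter.eventuallyEq_of_mem hmem fun t ht => h0 t ht)
  exact hd.unique hh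

lemma smul_e1 (t : ℝ) : t • (((1:ℝ), (0:ℝ)) : ℝ × ℝ) = (t, 0) := by
  simp [Prod.smul_def]

lemma smul_e2 (t : ℝ) : t • (((0:ℝ), (1:ℝ)) : ℝ × ℝ) = (0, t) := by
  simp [Prod.smul_def]

/-- Second partial derivatives at the origin expressed via the second `fderiv`. -/
lemma pd1_g_at_origin (f : ℝ × ℝ → ℝ) (hf : ContDiff ℝ 2 f)
    (g : ℝ × ℝ → ℝ) (w : ℝ × ℝ) (hg : ∀ q, g q = fderiv ℝ f q w) :
    pd1 g (0, 0) = fderiv ℝ (fderiv ℝ f) 0 (1, 0) w := by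
  have hfun : (fun t : ℝ => g (t, (0:ℝ)))
      = fun t : ℝ => fderiv ℝ f (t • (((1:ℝ), (0:ℝ)) : ℝ × ℝ)) w :=
    funext fun t => by rw [hg, smul_e1]
  show deriv (fun t : ℝ => g (t, (0:ℝ))) 0 = _
  rw [hfun]
  exact (key f hf (1, 0) w).deriv

lemma pd2_g_at_origin (f : ℝ × ℝ → ℝ) (hf : ContDiff ℝ 2 f)
    (g : ℝ × ℝ → ℝ) (w : ℝ × ℝ) (hg : ∀ q, g q = fderiv ℝ f q w) :
    pd2 g (0, 0) = fderiv ℝ (fderiv ℝ f) 0 (0, 1) w := by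
  have hfun : (fun t : ℝ => g ((0:ℝ), t))
      = fun t : ℝ => fderiv ℝ f (t • (((0:ℝ), (1:ℝ)) : ℝ × ℝ)) w :=
    funext fun t => by rw [hg, smul_e2]
  show deriv (fun t : ℝ => g ((0:ℝ), t)) 0 = _
  rw [hfun]
  exact (key f hf (0, 1) w).deriv

lemma clm_split (C : (ℝ × ℝ) →L[ℝ] (ℝ × ℝ) →L[ℝ] ℝ) (γ δ : ℝ) (w : ℝ × ℝ) :
    C (γ, δ) w = γ * C (1, 0) w + δ * C (0, 1) w := by
  have h : ((γ, δ) : ℝ × ℝ) = γ • (((1:ℝ), (0:ℝ)) : ℝ × ℝ) + δ • (((0:ℝ), (1:ℝ)) : ℝ × ℝ) := by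
    simp [Prod.ext_iff, Prod.smul_def]
  rw [h, map_add, map_smul, map_smul, ContinuousLinearMap.add_apply,
    ContinuousLinearMap.smul_apply, ContinuousLinearMap.smul_apply, smul_eq_mul, smul_eq_mul]

theorem overconstrained_strain_at_vertex
    (α β : ℝ) (hα : α ≠ 0) (hβ : β ≠ 0)
    (ψp ψm : ℝ × ℝ → ℝ) (hψp : ContDiff ℝ 2 ψp) (hψm : ContDiff ℝ 2 ψm)
    (ε : ℝ) (hε : 0 < ε)
    (hedge : ∀ t ∈ Set.Ioo (-ε) ε,
      pd1 ψp (t, 0) = pd1 ψm (t, 0) ∧ pd2 ψp (t, 0) = pd2 ψm (t, 0))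
    (hbcp : ∀ t ∈ Set.Ico (0 : ℝ) ε,
      pd1 ψp (t • ((β, α) : ℝ × ℝ)) = 0 ∧ pd2 ψp (t • ((β, α) : ℝ × ℝ)) = 0)
    (hbcm : ∀ t ∈ Set.Ico (0 : ℝ) ε,
      pd1 ψm (t • ((-β, α) : ℝ × ℝ)) = 0 ∧ pd2 ψm (t • ((-β, α) : ℝ × ℝ)) = 0) :
    hess ψp (0, 0) = 0 ∧ hess ψm (0, 0) = 0 ∧
    gradVec (curl2 ψp) (0, 0) = 0 ∧ gradVec (curl2 ψm) (0, 0) = 0 := by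
  have hdp : Differentiable ℝ ψp := hψp.differentiable two_ne_zero
  have hdm : Differentiable ℝ ψm := hψm.differentiable two_ne_zero
  set A := fderiv ℝ (fderiv ℝ ψp) 0 with hA
  set B := fderiv ℝ (fderiv ℝ ψm) 0 with hB
  -- symmetry of the second derivative
  have hAfd : HasFDerivAt (fderiv ℝ ψp) A 0 :=
    (((hψp.fderiv_right (by norm_num)).differentiable one_ne_zero) 0).hasFDerivAt
  have hBfd : HasFDerivAt (fderiv ℝ ψm) B 0 :=
    (((hψm.fderiv_right (by norm_num)).differentiable one_ne_zero) 0).hasFDerivAt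
  have symA : ∀ v w, A v w = A w v := fun v w =>
    second_derivative_symmetric (fun y => (hdp y).hasFDerivAt) hAfd v w
  have symB : ∀ v w, B v w = B w v := fun v w =>
    second_derivative_symmetric (fun y => (hdm y).hasFDerivAt) hBfd v w
  -- boundary conditions give `A (β, α) = 0` and `B (−β, α) = 0`
  have hAv1 : A (β, α) (1, 0) = 0 := by
    refine right_vanish_deriv _ _ (key ψp hψp (β, α) (1, 0)) ε hε fun t ht => ?_
    rw [← pd1_eq_fderiv ψp _ (hdp _)]; exact (hbcp t ht).1
  have hAv2 : A (β, α) (0, 1) = 0 := by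
    refine right_vanish_deriv _ _ (key ψp hψp (β, α) (0, 1)) ε hε fun t ht => ?_
    rw [← pd2_eq_fderiv ψp _ (hdp _)]; exact (hbcp t ht).2
  have hBv1 : B (-β, α) (1, 0) = 0 := by
    refine right_vanish_deriv _ _ (key ψm hψm (-β, α) (1, 0)) ε hε fun t ht => ?_
    rw [← pd1_eq_fderiv ψm _ (hdm _)]; exact (hbcm t ht).1
  have hBv2 : B (-β, α) (0, 1) = 0 := by
    refine right_vanish_deriv _ _ (key ψm hψm (-β, α) (0, 1)) ε hε fun t ht => ?_
    rw [← pd2_eq_fderiv ψm _ (hdm _)]; exact (hbcm t ht).2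
  -- the shared edge gives `A (1,0) w = B (1,0) w`
  have hedge1 : A (1, 0) (1, 0) = B (1, 0) (1, 0) := by
    have hd := (key ψp hψp (1, 0) (1, 0)).sub (key ψm hψm (1, 0) (1, 0))
    have := nhds_vanish_deriv _ _ hd ε hε fun t ht => by
      simp only [Pi.sub_apply]
      rw [smul_e1, ← pd1_eq_fderiv ψp _ (hdp _), ← pd1_eq_fderiv ψm _ (hdm _)]
      exact sub_eq_zero.mpr (hedge t ht).1
    exact sub_eq_zero.mp this
  have hedge2 : A (1, 0) (0, 1) = B (1, 0) (0, 1) := by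
    have hd := (key ψp hψp (1, 0) (0, 1)).sub (key ψm hψm (1, 0) (0, 1))
    have := nhds_vanish_deriv _ _ hd ε hε fun t ht => by
      simp only [Pi.sub_apply]
      rw [smul_e1, ← pd2_eq_fderiv ψp _ (hdp _), ← pd2_eq_fderiv ψm _ (hdm _)]
      exact sub_eq_zero.mpr (hedge t ht).2
    exact sub_eq_zero.mp this
  -- linear algebra: all four entries of `A` and of `B` vanish
  have eqA1 : β * A (1, 0) (1, 0) + α * A (0, 1) (1, 0) = 0 := by
    rw [← clm_split A]; exact hAv1
  have eqA2 : β * A (1, 0) (0, 1) + α * A (0, 1) (0, 1) = 0 := by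
    rw [← clm_split A]; exact hAv2
  have eqB1 : (-β) * B (1, 0) (1, 0) + α * B (0, 1) (1, 0) = 0 := by
    rw [← clm_split B]; exact hBv1
  have eqB2 : (-β) * B (1, 0) (0, 1) + α * B (0, 1) (0, 1) = 0 := by
    rw [← clm_split B]; exact hBv2
  rw [symA (0,1) (1,0)] at eqA1
  rw [symB (0,1) (1,0)] at eqB1
  rw [hedge1, hedge2] at eqA1
  -- deduce b = 0 then a = 0 etc.
  have hb' : B (1, 0) (0, 1) = 0 := by
    have h1 : α * B (1, 0) (0, 1) = 0 := by linarith
    exact (mul_eq_zero.mp h1).resolve_left hα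
  have hb : A (1, 0) (0, 1) = 0 := by rw [hedge2]; exact hb'
  have ha' : B (1, 0) (1, 0) = 0 := by
    have h1 : β * B (1, 0) (1, 0) = 0 := by
      rw [hb'] at eqB1; linarith
    exact (mul_eq_zero.mp h1).resolve_left hβ
  have ha : A (1, 0) (1, 0) = 0 := by rw [hedge1]; exact ha'
  have hc : A (0, 1) (0, 1) = 0 := by
    rw [hb] at eqA2
    have h1 : α * A (0, 1) (0, 1) = 0 := by linarith
    exact (mul_eq_zero.mp h1).resolve_left hα
  have hc' : B (0, 1) (0, 1) = 0 := by
    rw [hb'] at eqB2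
    have h1 : α * B (0, 1) (0, 1) = 0 := by linarith
    exact (mul_eq_zero.mp h1).resolve_left hα
  have hba : A (0, 1) (1, 0) = 0 := by rw [← symA]; exact hb
  have hba' : B (0, 1) (1, 0) = 0 := by rw [← symB]; exact hb'
  -- second partials of ψp and ψm at the origin
  have p11 : pd1 (pd1 ψp) (0, 0) = 0 := by
    rw [pd1_g_at_origin ψp hψp (pd1 ψp) (1, 0) fun q => pd1_eq_fderiv ψp q (hdp q)]
    exact ha
  have p21 : pd2 (pd1 ψp) (0, 0) = 0 := by
    rw [pd2_g_at_origin ψp hψp (pd1 ψp) (1, 0) fun q => pd1_eq_fderiv ψp q (hdp q)]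
    exact hba
  have p12 : pd1 (pd2 ψp) (0, 0) = 0 := by
    rw [pd1_g_at_origin ψp hψp (pd2 ψp) (0, 1) fun q => pd2_eq_fderiv ψp q (hdp q)]
    exact hb
  have p22 : pd2 (pd2 ψp) (0, 0) = 0 := by
    rw [pd2_g_at_origin ψp hψp (pd2 ψp) (0, 1) fun q => pd2_eq_fderiv ψp q (hdp q)]
    exact hc
  have m11 : pd1 (pd1 ψm) (0, 0) = 0 := by
    rw [pd1_g_at_origin ψm hψm (pd1 ψm) (1, 0) fun q => pd1_eq_fderiv ψm q (hdm q)]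
    exact ha'
  have m21 : pd2 (pd1 ψm) (0, 0) = 0 := by
    rw [pd2_g_at_origin ψm hψm (pd1 ψm) (1, 0) fun q => pd1_eq_fderiv ψm q (hdm q)]
    exact hba'
  have m12 : pd1 (pd2 ψm) (0, 0) = 0 := by
    rw [pd1_g_at_origin ψm hψm (pd2 ψm) (0, 1) fun q => pd2_eq_fderiv ψm q (hdm q)]
    exact hb'
  have m22 : pd2 (pd2 ψm) (0, 0) = 0 := by
    rw [pd2_g_at_origin ψm hψm (pd2 ψm) (0, 1) fun q => pd2_eq_fderiv ψm q (hdm q)]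
    exact hc'
  -- neg partials for curl
  have negp1 : ∀ g : ℝ × ℝ → ℝ, pd1 (fun q => -(g q)) (0, 0) = -(pd1 g (0, 0)) := by
    intro g; show deriv (fun t => -(g (t, 0))) 0 = _; rw [deriv.fun_neg]; rfl
  have negp2 : ∀ g : ℝ × ℝ → ℝ, pd2 (fun q => -(g q)) (0, 0) = -(pd2 g (0, 0)) := by
    intro g; show deriv (fun t => -(g (0, t))) 0 = _; rw [deriv.fun_neg]; rfl
  refine ⟨?_, ?_, ?_, ?_⟩
  · unfold hess; rw [p11, p21, p12, p22]
    ext i j; fin_cases i <;> fin_cases j <;> simp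
  · unfold hess; rw [m11, m21, m12, m22]
    ext i j; fin_cases i <;> fin_cases j <;> simp
  · unfold gradVec curl2
    simp only []
    rw [show (fun q => -(pd1 ψp q)) = (fun q => -(pd1 ψp q)) from rfl]
    rw [negp1 (pd1 ψp), negp2 (pd1 ψp), p11, p21, p12, p22]
    ext i j; fin_cases i <;> fin_cases j <;> simp
  · unfold gradVec curl2
    rw [negp1 (pd1 ψm), negp2 (pd1 ψm), m11, m21, m12, m22]
    ext i j; fin_cases i <;> fin_cases j <;> simp
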